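/- arXiv:2410.22820 — 3 statements merged into one kernel-verified Lean document; each statement's English description precedes it below -/
import Mathlib

section
/- For every configuration x in 𝒳 of a PIN model, the mean drift satisfies D(x) = (1−ρ)(Pᵀ − I)θ(x) + ρ·Q(ξ(x)), where Q : P(𝒜×𝒜) → ℝ^𝒜 is the linear operator with entries (Q(ξ))_i = Σ_{ℓ∈𝒜} Σ_{j∈𝒜} ξ_{jℓ} φ_{ji}(ℓ) − Σ_{ℓ∈𝒜} ξ_{iℓ}. -/
open Finset Filter

noncomputable section

/-- The empirical type (state frequencies) of a configuration. -/
def confType {V A : Type*} [Fintype V] [DecidableEq A] (x : V → A) (i : A) : ℝ :=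
  ((Finset.univ.filter fun v => x v = i).card : ℝ) / (Fintype.card V : ℝ)

/-- The boundary (empirical link-pair frequencies) of a configuration. -/
def boundary {V A : Type*} [DecidableEq A] (E : Finset (V × V)) (x : V → A) (i j : A) : ℝ :=
  ((E.filter fun e => x e.1 = i ∧ x e.2 = j).card : ℝ) / (E.card : ℝ)

/-- Off-diagonal part of the PIN transition matrix. -/
def Toff {V A : Type*} [Fintype V] [DecidableEq V] [DecidableEq A]
    (E : Finset (V × V)) (ρ : ℝ) (P : A → A → ℝ) (φ : A → A → A → ℝ) (x y : V → A) : ℝ :=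
  if (Finset.univ.filter fun v => x v ≠ y v).card = 1 then
    ∑ u ∈ Finset.univ.filter fun v => x v ≠ y v,
      ((1 - ρ) * (1 / (Fintype.card V : ℝ)) * P (x u) (y u)
        + (ρ / (E.card : ℝ)) * ∑ e ∈ E.filter fun e => e.1 = u, φ (x u) (y u) (x e.2))
  else 0

/-- The PIN transition matrix. -/
def pinTrans {V A : Type*} [Fintype V] [DecidableEq V] [Fintype A] [DecidableEq A]
    (E : Finset (V × V)) (ρ : ℝ) (P : A → A → ℝ) (φ : A → A → A → ℝ) (x y : V → A) : ℝ :=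
  if x = y then 1 - ∑ z : V → A, Toff E ρ P φ x z else Toff E ρ P φ x y

/-- The mean drift of the PIN model. -/
def meanDrift {V A : Type*} [Fintype V] [DecidableEq V] [Fintype A] [DecidableEq A]
    (E : Finset (V × V)) (ρ : ℝ) (P : A → A → ℝ) (φ : A → A → A → ℝ) (x : V → A) (i : A) : ℝ :=
  (Fintype.card V : ℝ) * ∑ y : V → A, pinTrans E ρ P φ x y * (confType y i - confType x i)

/-- The limit drift of the PIN model. -/
def limitDrift {A : Type*} [Fintype A] (ρ : ℝ) (P : A → A → ℝ) (φ : A → A → A → ℝ)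
    (θ : A → ℝ) (i : A) : ℝ :=
  ((1 - ρ) * ∑ j, P j i * θ j) + (ρ * ∑ ℓ, θ ℓ * ∑ j, φ j i ℓ * θ j) - θ i

/-- The linear operator Q acting on boundaries. -/
def Qop {A : Type*} [Fintype A] (φ : A → A → A → ℝ) (ξ : A → A → ℝ) (i : A) : ℝ :=
  (∑ ℓ, ∑ j, ξ j ℓ * φ j i ℓ) - ∑ ℓ, ξ i ℓ

/-- Membership in the probability simplex over `A`. -/
def inSimplex {A : Type*} [Fintype A] (θ : A → ℝ) : Prop :=
  (∀ i, 0 ≤ θ i) ∧ ∑ i, θ i = 1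

/-- The hypotheses on the parameters of a PIN model: `ρ ∈ [0,1]`, `P` and each `φ(ℓ)`
row-stochastic and nonnegative, the interaction graph nonempty and without self-loops. -/
def IsPinModel {V A : Type*} [Fintype A] (E : Finset (V × V)) (ρ : ℝ)
    (P : A → A → ℝ) (φ : A → A → A → ℝ) : Prop :=
  0 ≤ ρ ∧ ρ ≤ 1 ∧ (∀ i j, 0 ≤ P i j) ∧ (∀ i, ∑ j, P i j = 1) ∧
    (∀ i j ℓ, 0 ≤ φ i j ℓ) ∧ (∀ i ℓ, ∑ j, φ i j ℓ = 1) ∧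
    E.Nonempty ∧ ∀ e ∈ E, e.1 ≠ e.2

/-- Stationary distribution of a PIN model. -/
def IsPinStationary {V A : Type*} [Fintype V] [DecidableEq V] [Fintype A] [DecidableEq A]
    (E : Finset (V × V)) (ρ : ℝ) (P : A → A → ℝ) (φ : A → A → A → ℝ)
    (μ : (V → A) → ℝ) : Prop :=
  (∀ x, 0 ≤ μ x) ∧ (∑ x : V → A, μ x = 1) ∧
    ∀ y : V → A, ∑ x : V → A, μ x * pinTrans E ρ P φ x y = μ y

/-- The total mixing gap of a graph. -/
def mixingGap {V : Type*} [Fintype V] [DecidableEq V] (E : Finset (V × V)) : ℝ :=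
  sSup {w : ℝ | ∃ S U : Finset V, Disjoint S U ∧
    w = |((E.filter fun e => e.1 ∈ S ∧ e.2 ∈ U).card : ℝ) / (E.card : ℝ) -
      ((S.card : ℝ) * (U.card : ℝ)) / ((Fintype.card V : ℝ) * ((Fintype.card V : ℝ) - 1))|}

open Classical in
/-- Total `μ`-mass of the set of configurations satisfying `p`. -/
def massOf {X : Type*} [Fintype X] (μ : X → ℝ) (p : X → Prop) : ℝ :=
  ∑ x, if p x then μ x else 0

section Aux0
set_option linter.unusedSectionVars false
variable {V A : Type*} [Fintype V] [DecidableEq V] [Fintype A] [DecidableEq A]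

lemma card_filter_real (p : V → Prop) [DecidablePred p] :
    (((Finset.univ.filter p).card : ℕ) : ℝ) = ∑ v : V, if p v then (1:ℝ) else 0 := by
  rw [Finset.card_filter]; push_cast; simp

omit [Fintype A] in
lemma confType_update_sub (x : V → A) (u : V) (a i : A) :
    confType (Function.update x u a) i - confType x i
      = (((if a = i then (1:ℝ) else 0) - if x u = i then 1 else 0)) / (Fintype.card V : ℝ) := by
  unfold confType
  rw [div_sub_div_same]
  congr 1
  rw [card_filter_real, card_filter_real]
  have h1 : ∀ v, (if Function.update x u a v = i then (1:ℝ) else 0)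
      = Function.update (fun v => if x v = i then (1:ℝ) else 0) u (if a = i then 1 else 0) v := by
    intro v; by_cases hv : v = u <;> simp [hv, Function.update]
  rw [Finset.sum_congr rfl (fun v _ => h1 v), Finset.sum_update_of_mem (Finset.mem_univ u),
      ← Finset.add_sum_erase _ _ (Finset.mem_univ u), Finset.erase_eq]
  ring

omit [Fintype A] in
lemma filter_ne_update (x : V → A) (u : V) (a : A) (ha : a ≠ x u) :
    (Finset.univ.filter fun v => x v ≠ Function.update x u a v) = {u} := by
  ext v
  by_cases hv : v = u
  · subst hv
    simpa [Function.update] using fun h => ha h.symm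
  · simp [Function.update, hv]

omit [Fintype A] in
lemma Toff_update (E : Finset (V × V)) (ρ : ℝ) (P : A → A → ℝ) (φ : A → A → A → ℝ)
    (x : V → A) (u : V) (a : A) (ha : a ≠ x u) :
    Toff E ρ P φ x (Function.update x u a)
      = (1 - ρ) * (1 / (Fintype.card V : ℝ)) * P (x u) a
        + (ρ / (E.card : ℝ)) * ∑ e ∈ E.filter fun e => e.1 = u, φ (x u) a (x e.2) := by
  unfold Toff
  rw [filter_ne_update x u a ha]
  simp

lemma sum_vertex_fiber (x : V → A) (h : A → ℝ) :
    ∑ u : V, h (x u) = ∑ j, ((Finset.univ.filter fun u => x u = j).card : ℝ) * h j := by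
  rw [← Finset.sum_fiberwise Finset.univ x (fun u => h (x u))]
  refine Finset.sum_congr rfl fun j _ => ?_
  rw [Finset.sum_congr rfl (fun u hu => by rw [(Finset.mem_filter.mp hu).2]),
    Finset.sum_const, nsmul_eq_mul]

lemma sum_edges_fiber (E : Finset (V × V)) (x : V → A) (h : A → A → ℝ) :
    ∑ e ∈ E, h (x e.1) (x e.2)
      = ∑ j, ∑ ℓ, ((E.filter fun e => x e.1 = j ∧ x e.2 = ℓ).card : ℝ) * h j ℓ := by
  have key := Fintype.sum_prod_type
    (f := fun q : A × A => ((E.filter fun e => x e.1 = q.1 ∧ x e.2 = q.2).card : ℝ) * h q.1 q.2)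
  rw [← Finset.sum_fiberwise E (fun e => (x e.1, x e.2)) (fun e => h (x e.1) (x e.2))]
  rw [show (∑ j, ∑ ℓ, ((E.filter fun e => x e.1 = j ∧ x e.2 = ℓ).card : ℝ) * h j ℓ)
      = ∑ q : A × A, ((E.filter fun e => x e.1 = q.1 ∧ x e.2 = q.2).card : ℝ) * h q.1 q.2
    from key.symm]
  refine Finset.sum_congr rfl fun q _ => ?_
  have hfq : (E.filter fun e => (x e.1, x e.2) = q) = E.filter fun e => x e.1 = q.1 ∧ x e.2 = q.2 := by
    apply Finset.filter_congr; intro e _; simp [Prod.ext_iff]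
  rw [hfq]
  rw [Finset.sum_congr rfl (fun e he => by
      obtain ⟨h1, h2⟩ := (Finset.mem_filter.mp he).2
      rw [h1, h2]),
    Finset.sum_const, nsmul_eq_mul]

end Aux0
/-- Lemma: representation of the mean drift.
For every configuration `x` of a PIN model, the mean drift satisfies
`D(x) = (1−ρ)(Pᵀ − I)θ(x) + ρ·Q(ξ(x))`. -/
theorem meanDrift_eq {V A : Type*} [Fintype V] [DecidableEq V]
    [Fintype A] [DecidableEq A] [Nonempty A]
    (E : Finset (V × V)) (ρ : ℝ) (P : A → A → ℝ) (φ : A → A → A → ℝ)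
    (hmodel : IsPinModel E ρ P φ) (x : V → A) (i : A) :
    meanDrift E ρ P φ x i =
      (1 - ρ) * ((∑ j, P j i * confType x j) - confType x i)
        + ρ * Qop φ (boundary E x) i := by
  obtain ⟨hρ0, hρ1, hP0, hProw, hφ0, hφrow, hE, hloop⟩ := hmodel
  obtain ⟨e0, he0⟩ := hE
  have hV : Nonempty V := ⟨e0.1⟩
  have hn : (Fintype.card V : ℝ) ≠ 0 := by
    exact_mod_cast Fintype.card_ne_zero
  have hm : ((E.card : ℕ) : ℝ) ≠ 0 := by
    have : E.card ≠ 0 := Finset.card_ne_zero_of_mem he0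
    exact_mod_cast this
  set n : ℝ := (Fintype.card V : ℝ) with hn_def
  set m : ℝ := ((E.card : ℕ) : ℝ) with hm_def
  -- notation for the bracket and the indicator difference
  set B : V → A → ℝ := fun u a =>
    (1 - ρ) * (1 / n) * P (x u) a
      + (ρ / m) * ∑ e ∈ E.filter fun e => e.1 = u, φ (x u) a (x e.2) with hB
  set c : V → A → ℝ := fun u a =>
    (if a = i then (1:ℝ) else 0) - if x u = i then 1 else 0 with hc
  -- the key pointwise identity on pairs with a ≠ x u
  have hF : ∀ u a, a ≠ x u →
      B u a * (c u a / n)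
        = Toff E ρ P φ x (Function.update x u a)
            * (confType (Function.update x u a) i - confType x i) := by
    intro u a ha
    rw [Toff_update E ρ P φ x u a ha, confType_update_sub x u a i]
  -- Step 1: replace pinTrans by Toff in the drift sum
  have step1 : ∑ y : V → A, pinTrans E ρ P φ x y * (confType y i - confType x i)
      = ∑ y : V → A, Toff E ρ P φ x y * (confType y i - confType x i) := by
    refine Finset.sum_congr rfl fun y _ => ?_
    by_cases hy : x = y
    · subst hy; simp
    · rw [pinTrans, if_neg hy]
  -- Step 2: reindex by (node, new state)
  have step2 : ∑ p : V × A, B p.1 p.2 * (c p.1 p.2 / n)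
      = ∑ y : V → A, Toff E ρ P φ x y * (confType y i - confType x i) := by
    refine Finset.sum_bij_ne_zero (fun p _ _ => Function.update x p.1 p.2)
      (fun _ _ _ => Finset.mem_univ _) ?_ ?_ ?_
    · rintro ⟨u₁, a₁⟩ _ h₁ ⟨u₂, a₂⟩ _ h₂ heq
      have ha₁ : a₁ ≠ x u₁ := by
        intro hcontra
        apply h₁
        simp [hc, hcontra]
      have ha₂ : a₂ ≠ x u₂ := by
        intro hcontra
        apply h₂
        simp [hc, hcontra]
      have heq' : Function.update x u₁ a₁ = Function.update x u₂ a₂ := heq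
      have h1 : Function.update x u₁ a₁ u₁ = Function.update x u₂ a₂ u₁ := congrFun heq' u₁
      rw [Function.update_self] at h1
      by_cases huv : u₂ = u₁
      · subst huv
        rw [Function.update_self] at h1
        simp [h1]
      · rw [Function.update_of_ne (by exact fun h => huv h.symm)] at h1
        exact absurd h1 ha₁
    · intro y _ hy
      have hToff : Toff E ρ P φ x y ≠ 0 := fun h => hy (by rw [h, zero_mul])
      have hcard : (Finset.univ.filter fun v => x v ≠ y v).card = 1 := by
        by_contra h
        exact hToff (by rw [Toff, if_neg h])
      obtain ⟨u, hu⟩ := Finset.card_eq_one.mp hcard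
      have hxu : x u ≠ y u := by
        have : u ∈ Finset.univ.filter fun v => x v ≠ y v := by rw [hu]; exact Finset.mem_singleton_self u
        exact (Finset.mem_filter.mp this).2
      have hyeq : Function.update x u (y u) = y := by
        funext v
        by_cases hv : v = u
        · subst hv; rw [Function.update_self]
        · rw [Function.update_of_ne hv]
          by_contra hne
          have : v ∈ Finset.univ.filter fun w => x w ≠ y w := by
            simp [hne]
          rw [hu, Finset.mem_singleton] at this
          exact hv this
      refine ⟨(u, y u), Finset.mem_univ _, ?_, hyeq⟩
      rw [hF u (y u) (fun h => hxu h.symm), hyeq]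
      exact hy
    · rintro ⟨u, a⟩ _ hne
      have ha : a ≠ x u := by
        intro hcontra
        apply hne
        simp [hc, hcontra]
      exact hF u a ha
  -- assemble
  rw [meanDrift, step1, ← step2, ← hn_def]
  rw [Fintype.sum_prod_type]
  -- clear the 1/n factor
  have hmain : (n : ℝ) * ∑ u : V, ∑ a : A, B u a * (c u a / n)
      = ∑ u : V, ∑ a : A, B u a * c u a := by
    rw [Finset.mul_sum]
    refine Finset.sum_congr rfl fun u _ => ?_
    rw [Finset.mul_sum]
    refine Finset.sum_congr rfl fun a _ => ?_
    field_simp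
  rw [hmain]
  -- inner sums over a
  have hinner : ∀ u : V, ∑ a : A, B u a * c u a
      = (1 - ρ) * (1 / n) * (P (x u) i - if x u = i then 1 else 0)
        + (ρ / m) * ∑ e ∈ E.filter fun e => e.1 = u,
            (φ (x u) i (x e.2) - if x u = i then 1 else 0) := by
    intro u
    have e1 : ∑ a : A, P (x u) a * ((if a = i then (1:ℝ) else 0) - if x u = i then 1 else 0)
        = P (x u) i - if x u = i then 1 else 0 := by
      rw [show (∑ a : A, P (x u) a * ((if a = i then (1:ℝ) else 0) - if x u = i then 1 else 0))
          = (∑ a : A, P (x u) a * (if a = i then (1:ℝ) else 0))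
            - ∑ a : A, P (x u) a * (if x u = i then 1 else 0) by
        rw [← Finset.sum_sub_distrib]; exact Finset.sum_congr rfl fun a _ => by ring]
      rw [← Finset.sum_mul, hProw]
      simp [Finset.sum_ite_eq']
    have e2 : ∀ ℓ : A, ∑ a : A, φ (x u) a ℓ * ((if a = i then (1:ℝ) else 0) - if x u = i then 1 else 0)
        = φ (x u) i ℓ - if x u = i then 1 else 0 := by
      intro ℓ
      rw [show (∑ a : A, φ (x u) a ℓ * ((if a = i then (1:ℝ) else 0) - if x u = i then 1 else 0))
          = (∑ a : A, φ (x u) a ℓ * (if a = i then (1:ℝ) else 0))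
            - ∑ a : A, φ (x u) a ℓ * (if x u = i then 1 else 0) by
        rw [← Finset.sum_sub_distrib]; exact Finset.sum_congr rfl fun a _ => by ring]
      rw [← Finset.sum_mul, hφrow]
      simp [Finset.sum_ite_eq']
    calc ∑ a : A, B u a * c u a
        = ∑ a : A, ((1 - ρ) * (1 / n) * (P (x u) a * c u a)
            + (ρ / m) * ∑ e ∈ E.filter fun e => e.1 = u, φ (x u) a (x e.2) * c u a) := by
          refine Finset.sum_congr rfl fun a _ => ?_
          simp only [hB]
          rw [add_mul]
          congr 1
          · ring
          · rw [mul_assoc, Finset.sum_mul]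
      _ = (1 - ρ) * (1 / n) * ∑ a : A, P (x u) a * c u a
            + (ρ / m) * ∑ a : A, ∑ e ∈ E.filter fun e => e.1 = u, φ (x u) a (x e.2) * c u a := by
          rw [Finset.sum_add_distrib, ← Finset.mul_sum, ← Finset.mul_sum]
      _ = (1 - ρ) * (1 / n) * (P (x u) i - if x u = i then 1 else 0)
            + (ρ / m) * ∑ e ∈ E.filter fun e => e.1 = u,
                (φ (x u) i (x e.2) - if x u = i then 1 else 0) := by
          rw [Finset.sum_comm]
          congr 1
          · rw [e1]
          · congr 1
            exact Finset.sum_congr rfl fun e _ => e2 (x e.2)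
  rw [Finset.sum_congr rfl fun u _ => hinner u]
  rw [Finset.sum_add_distrib, ← Finset.mul_sum, ← Finset.mul_sum]
  -- sum over u of the edge-grouped sums = sum over E
  have hedge : ∑ u : V, ∑ e ∈ E.filter fun e => e.1 = u,
      (φ (x u) i (x e.2) - if x u = i then 1 else 0)
      = ∑ e ∈ E, (φ (x e.1) i (x e.2) - if x e.1 = i then 1 else 0) := by
    rw [← Finset.sum_fiberwise E (fun e => e.1)
      (fun e => φ (x e.1) i (x e.2) - if x e.1 = i then 1 else 0)]
    refine Finset.sum_congr rfl fun u _ => ?_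
    refine Finset.sum_congr rfl fun e he => ?_
    rw [(Finset.mem_filter.mp he).2]
  rw [hedge]
  -- fiberwise decompositions
  have hv1 : ∑ u : V, (P (x u) i - if x u = i then 1 else 0)
      = ∑ j, ((Finset.univ.filter fun u => x u = j).card : ℝ)
          * (P j i - if j = i then 1 else 0) :=
    sum_vertex_fiber x (fun j => P j i - if j = i then 1 else 0)
  have he1 : ∑ e ∈ E, (φ (x e.1) i (x e.2) - if x e.1 = i then 1 else 0)
      = ∑ j, ∑ ℓ, ((E.filter fun e => x e.1 = j ∧ x e.2 = ℓ).card : ℝ)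
          * (φ j i ℓ - if j = i then 1 else 0) :=
    sum_edges_fiber E x (fun j ℓ => φ j i ℓ - if j = i then 1 else 0)
  rw [hv1, he1]
  -- now unfold RHS definitions and finish by algebra
  rw [Qop]
  unfold confType boundary
  rw [← hn_def, ← hm_def]
  -- express everything over common denominators
  have key1 : ∑ j, P j i * (((Finset.univ.filter fun v => x v = j).card : ℝ) / n)
      = (∑ j, ((Finset.univ.filter fun v => x v = j).card : ℝ) * P j i) / n := by
    rw [Finset.sum_div]
    exact Finset.sum_congr rfl fun j _ => by ring
  have key2 : ∑ ℓ, ∑ j, (((E.filter fun e => x e.1 = j ∧ x e.2 = ℓ).card : ℝ) / m) * φ j i ℓ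
      = (∑ ℓ, ∑ j, ((E.filter fun e => x e.1 = j ∧ x e.2 = ℓ).card : ℝ) * φ j i ℓ) / m := by
    rw [Finset.sum_div]
    refine Finset.sum_congr rfl fun ℓ _ => ?_
    rw [Finset.sum_div]
    exact Finset.sum_congr rfl fun j _ => by ring
  have key3 : ∑ ℓ, (((E.filter fun e => x e.1 = i ∧ x e.2 = ℓ).card : ℝ) / m)
      = (∑ ℓ, ((E.filter fun e => x e.1 = i ∧ x e.2 = ℓ).card : ℝ)) / m := by
    rw [Finset.sum_div]
  rw [key1, key2, key3]
  -- split card sums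
  have split1 : ∑ j, ((Finset.univ.filter fun u => x u = j).card : ℝ)
      * (P j i - if j = i then 1 else 0)
      = (∑ j, ((Finset.univ.filter fun v => x v = j).card : ℝ) * P j i)
        - ((Finset.univ.filter fun v => x v = i).card : ℝ) := by
    rw [show (∑ j, ((Finset.univ.filter fun u => x u = j).card : ℝ)
        * (P j i - if j = i then 1 else 0))
        = (∑ j, ((Finset.univ.filter fun u => x u = j).card : ℝ) * P j i)
          - ∑ j, ((Finset.univ.filter fun u => x u = j).card : ℝ) * (if j = i then 1 else 0) by
      rw [← Finset.sum_sub_distrib]; exact Finset.sum_congr rfl fun j _ => by ring]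
    congr 1
    simp [Finset.sum_ite_eq', mul_comm]
  have split2 : ∑ j, ∑ ℓ, ((E.filter fun e => x e.1 = j ∧ x e.2 = ℓ).card : ℝ)
      * (φ j i ℓ - if j = i then 1 else 0)
      = (∑ ℓ, ∑ j, ((E.filter fun e => x e.1 = j ∧ x e.2 = ℓ).card : ℝ) * φ j i ℓ)
        - ∑ ℓ, ((E.filter fun e => x e.1 = i ∧ x e.2 = ℓ).card : ℝ) := by
    rw [show (∑ j, ∑ ℓ, ((E.filter fun e => x e.1 = j ∧ x e.2 = ℓ).card : ℝ)
        * (φ j i ℓ - if j = i then 1 else 0))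
        = (∑ j, ∑ ℓ, ((E.filter fun e => x e.1 = j ∧ x e.2 = ℓ).card : ℝ) * φ j i ℓ)
          - ∑ j, ∑ ℓ, ((E.filter fun e => x e.1 = j ∧ x e.2 = ℓ).card : ℝ)
              * (if j = i then 1 else 0) by
      rw [← Finset.sum_sub_distrib]
      refine Finset.sum_congr rfl fun j _ => ?_
      rw [← Finset.sum_sub_distrib]
      exact Finset.sum_congr rfl fun ℓ _ => by ring]
    congr 1
    · exact Finset.sum_comm
    · rw [Finset.sum_comm]
      refine Finset.sum_congr rfl fun ℓ _ => ?_
      simp [Finset.sum_ite_eq', mul_comm]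
  rw [split1, split2]
  field_simp

end
end

section
/- For every configuration x in 𝒳 of a PIN model, ‖D(x) − D̄(θ(x))‖₁ ≤ 2ρ‖ξ(x) − θ(x)θ(x)ᵀ‖₁, where for a matrix M ∈ ℝ^{𝒜×𝒜} the norm ‖M‖₁ denotes Σ_{i,j}|M_{ij}|, and θ(x)θ(x)ᵀ is the matrix with entries θ_i(x)θ_j(x). -/
open Finset Filter

noncomputable section

/-- Stationary distribution of a PIN model. -/
def IsStationaryPin {V A : Type*} [Fintype V] [DecidableEq V] [Fintype A] [DecidableEq A]
    (E : Finset (V × V)) (ρ : ℝ) (P : A → A → ℝ) (φ : A → A → A → ℝ)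
    (μ : (V → A) → ℝ) : Prop :=
  (∀ x, 0 ≤ μ x) ∧ (∑ x : V → A, μ x = 1) ∧
    ∀ y : V → A, ∑ x : V → A, μ x * pinTrans E ρ P φ x y = μ y

/-- The mean drift of a PIN model, expressed through the type and the boundary of the
configuration: `D(x) = (1−ρ)(Pᵀ − I)θ(x) + ρ·Q(ξ(x))`. -/
def meanDriftF {V A : Type*} [Fintype V] [DecidableEq A] [Fintype A]
    (E : Finset (V × V)) (ρ : ℝ) (P : A → A → ℝ) (φ : A → A → A → ℝ)
    (x : V → A) (i : A) : ℝ :=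
  (1 - ρ) * ((∑ j, P j i * confType x j) - confType x i) + ρ * Qop φ (boundary E x) i

/-- Lemma: the mean drift is close to the limit drift.
`‖D(x) − D̄(θ(x))‖₁ ≤ 2ρ‖ξ(x) − θ(x)θ(x)ᵀ‖₁` for every configuration `x`. -/
theorem meanDrift_close_limitDrift {V A : Type*} [Fintype V] [DecidableEq V]
    [Fintype A] [DecidableEq A] [Nonempty A]
    (E : Finset (V × V)) (ρ : ℝ) (P : A → A → ℝ) (φ : A → A → A → ℝ)
    (hmodel : IsPinModel E ρ P φ) (x : V → A) :
    ∑ i, |meanDriftF E ρ P φ x i - limitDrift ρ P φ (confType x) i| ≤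
      2 * ρ * ∑ i, ∑ j, |boundary E x i j - confType x i * confType x j| := by
  obtain ⟨hρ0, hρ1, hP0, hProw, hφ0, hφrow, ⟨e, he⟩, hloop⟩ := hmodel
  haveI : Nonempty V := ⟨e.1⟩
  set θ := confType x with hθ
  set ξ := boundary E x with hξ
  have hVcard : (Fintype.card V : ℝ) ≠ 0 := by
    exact_mod_cast Fintype.card_ne_zero
  have hsum : ∑ i, θ i = 1 := by
    simp only [hθ, confType, ← Finset.sum_div]
    rw [div_eq_one_iff_eq hVcard]
    rw [← Nat.cast_sum]
    norm_cast
    rw [← Finset.card_univ (α := V)]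
    exact (Finset.card_eq_sum_card_fiberwise (fun v _ => Finset.mem_univ (x v))).symm
  have h2 : ∀ i, ∑ ℓ, θ i * θ ℓ = θ i := by
    intro i; rw [← Finset.mul_sum, hsum, mul_one]
  have key : ∀ i, meanDriftF E ρ P φ x i - limitDrift ρ P φ θ i =
      ρ * ((∑ ℓ, ∑ j, (ξ j ℓ - θ j * θ ℓ) * φ j i ℓ) - ∑ ℓ, (ξ i ℓ - θ i * θ ℓ)) := by
    intro i
    have h1 : ∑ ℓ, θ ℓ * ∑ j, φ j i ℓ * θ j = ∑ ℓ, ∑ j, (θ j * θ ℓ) * φ j i ℓ := by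
      refine Finset.sum_congr rfl fun ℓ _ => ?_
      rw [Finset.mul_sum]
      exact Finset.sum_congr rfl fun j _ => by ring
    simp only [meanDriftF, limitDrift, Qop, sub_mul, Finset.sum_sub_distrib, h1, h2 i]
    ring
  calc ∑ i, |meanDriftF E ρ P φ x i - limitDrift ρ P φ θ i|
      ≤ ∑ i, ρ * ((∑ ℓ, ∑ j, |ξ j ℓ - θ j * θ ℓ| * φ j i ℓ) + ∑ ℓ, |ξ i ℓ - θ i * θ ℓ|) := by
        refine Finset.sum_le_sum fun i _ => ?_
        rw [key i, abs_mul, abs_of_nonneg hρ0]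
        refine mul_le_mul_of_nonneg_left ?_ hρ0
        refine (abs_sub _ _).trans (add_le_add ?_ ?_)
        · refine (Finset.abs_sum_le_sum_abs _ _).trans (Finset.sum_le_sum fun ℓ _ => ?_)
          refine (Finset.abs_sum_le_sum_abs _ _).trans (Finset.sum_le_sum fun j _ => ?_)
          rw [abs_mul, abs_of_nonneg (hφ0 j i ℓ)]
        · exact Finset.abs_sum_le_sum_abs _ _
    _ = 2 * ρ * ∑ i, ∑ j, |ξ i j - θ i * θ j| := by
        simp only [← Finset.mul_sum, Finset.sum_add_distrib]
        have hA : ∑ i, ∑ ℓ, ∑ j : A, |ξ j ℓ - θ j * θ ℓ| * φ j i ℓ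
            = ∑ i, ∑ j : A, |ξ i j - θ i * θ j| := by
          rw [Finset.sum_comm]
          have per : ∀ ℓ : A, ∑ i : A, ∑ j : A, |ξ j ℓ - θ j * θ ℓ| * φ j i ℓ
              = ∑ j : A, |ξ j ℓ - θ j * θ ℓ| := by
            intro ℓ
            rw [Finset.sum_comm]
            refine Finset.sum_congr rfl fun j _ => ?_
            rw [← Finset.mul_sum, hφrow j ℓ, mul_one]
          simp only [per]
          rw [Finset.sum_comm]
        rw [hA]
        ring

end
end

section
/- Let μ be a stationary distribution of a PIN model on a graph with n nodes. Suppose V : ℝ^𝒜 → ℝ is twice continuously differentiable, F : 𝒳 → ℝ₊ is nonnegative, ε ≥ 0, and ∇V(θ(x))·D(x) ≤ −F(x) + ε for every configuration x ∈ 𝒳. Then there exists a constant K > 0 depending only on V such that for every δ > 0, μ({x ∈ 𝒳 : F(x) < δ}) ≥ 1 − K/(nδ) − ε/δ. -/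
open Finset Filter

noncomputable section

/-- Stationary distribution of a PIN model. -/
def PinIsStationary {V A : Type*} [Fintype V] [DecidableEq V] [Fintype A] [DecidableEq A]
    (E : Finset (V × V)) (ρ : ℝ) (P : A → A → ℝ) (φ : A → A → A → ℝ)
    (μ : (V → A) → ℝ) : Prop :=
  (∀ x, 0 ≤ μ x) ∧ (∑ x : V → A, μ x = 1) ∧
    ∀ y : V → A, ∑ x : V → A, μ x * pinTrans E ρ P φ x y = μ y

section AuxLemmas

set_option linter.unusedSectionVars false

variable {V A : Type*} [Fintype V] [DecidableEq V] [Fintype A] [DecidableEq A]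
variable {E : Finset (V × V)} {ρ : ℝ} {P : A → A → ℝ} {φ : A → A → A → ℝ}

lemma Toff_self (x : V → A) : Toff E ρ P φ x x = 0 := by
  unfold Toff; simp

lemma Toff_eq_zero {x y : V → A} (h : (Finset.univ.filter fun v => x v ≠ y v).card ≠ 1) :
    Toff E ρ P φ x y = 0 := by
  unfold Toff; rw [if_neg h]

lemma pinTrans_rowsum (x : V → A) : ∑ y : V → A, pinTrans E ρ P φ x y = 1 := by
  rw [← Finset.add_sum_erase Finset.univ _ (Finset.mem_univ x)]
  rw [Finset.sum_congr rfl (fun y hy => by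
    rw [pinTrans, if_neg (fun h => (Finset.ne_of_mem_erase hy) h.symm)])]
  have h2 : pinTrans E ρ P φ x x
      = 1 - ∑ z ∈ Finset.univ.erase x, Toff E ρ P φ x z := by
    rw [pinTrans, if_pos rfl, ← Finset.add_sum_erase Finset.univ _ (Finset.mem_univ x),
      Toff_self, zero_add]
  rw [h2]; ring

lemma Toff_nonneg (h : IsPinModel E ρ P φ) (x y : V → A) : 0 ≤ Toff E ρ P φ x y := by
  obtain ⟨hρ0, hρ1, hP, -, hφ, -⟩ := h
  unfold Toff
  split
  · refine Finset.sum_nonneg fun u _ => add_nonneg ?_ ?_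
    · have h1 : (0:ℝ) ≤ 1 - ρ := by linarith
      exact mul_nonneg (mul_nonneg h1 (by positivity)) (hP _ _)
    · exact mul_nonneg (div_nonneg hρ0 (Nat.cast_nonneg _))
        (Finset.sum_nonneg fun e _ => hφ _ _ _)
  · exact le_rfl

lemma confType_norm_le (x : V → A) : ‖(confType x : A → ℝ)‖ ≤ 1 := by
  rw [pi_norm_le_iff_of_nonneg zero_le_one]
  intro i
  rw [Real.norm_eq_abs, abs_le]
  constructor
  · have : (0:ℝ) ≤ confType x i := by unfold confType; positivity
    linarith
  · unfold confType
    apply div_le_one_of_le₀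
    · exact_mod_cast (Finset.card_filter_le Finset.univ _).trans_eq Finset.card_univ
    · positivity

lemma confType_sub_norm_le (x y : V → A)
    (h : (Finset.univ.filter fun v => x v ≠ y v).card = 1) :
    ‖(confType y - confType x : A → ℝ)‖ ≤ 1 / (Fintype.card V : ℝ) := by
  obtain ⟨u, hu⟩ := Finset.card_eq_one.mp h
  have hn : 0 < (Fintype.card V : ℝ) := by
    exact_mod_cast Fintype.card_pos_iff.mpr ⟨u⟩
  rw [pi_norm_le_iff_of_nonneg (by positivity)]
  intro i
  have key : ∀ i : A, (Finset.univ.filter fun v => y v = i).card ≤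
      (Finset.univ.filter fun v => x v = i).card + 1 := by
    intro i
    have hsub : (Finset.univ.filter fun v => y v = i) ⊆
        insert u (Finset.univ.filter fun v => x v = i) := by
      intro v hv
      rw [Finset.mem_filter] at hv
      by_cases hxy : x v = y v
      · exact Finset.mem_insert_of_mem (Finset.mem_filter.mpr ⟨Finset.mem_univ v, hxy.trans hv.2⟩)
      · have : v ∈ ({u} : Finset V) := hu ▸ Finset.mem_filter.mpr ⟨Finset.mem_univ v, hxy⟩
        exact Finset.mem_insert.mpr (Or.inl (Finset.mem_singleton.mp this))
    exact (Finset.card_le_card hsub).trans (Finset.card_insert_le _ _)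
  have key' : ∀ i : A, (Finset.univ.filter fun v => x v = i).card ≤
      (Finset.univ.filter fun v => y v = i).card + 1 := by
    intro i
    have hsub : (Finset.univ.filter fun v => x v = i) ⊆
        insert u (Finset.univ.filter fun v => y v = i) := by
      intro v hv
      rw [Finset.mem_filter] at hv
      by_cases hxy : x v = y v
      · exact Finset.mem_insert_of_mem
          (Finset.mem_filter.mpr ⟨Finset.mem_univ v, hxy.symm.trans hv.2⟩)
      · have : v ∈ ({u} : Finset V) := hu ▸ Finset.mem_filter.mpr ⟨Finset.mem_univ v, hxy⟩
        exact Finset.mem_insert.mpr (Or.inl (Finset.mem_singleton.mp this))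
    exact (Finset.card_le_card hsub).trans (Finset.card_insert_le _ _)
  have h1 := key i; have h2 := key' i
  rw [Pi.sub_apply, Real.norm_eq_abs]
  unfold confType
  rw [div_sub_div_same, abs_div, abs_of_pos hn, div_le_div_iff_of_pos_right hn]
  have h1' : ((Finset.univ.filter fun v => y v = i).card : ℝ) ≤
      ((Finset.univ.filter fun v => x v = i).card : ℝ) + 1 := by exact_mod_cast h1
  have h2' : ((Finset.univ.filter fun v => x v = i).card : ℝ) ≤
      ((Finset.univ.filter fun v => y v = i).card : ℝ) + 1 := by exact_mod_cast h2
  rw [abs_le]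
  constructor <;> linarith

lemma offsum_le_one (h : IsPinModel E ρ P φ) (hn : Fintype.card V ≠ 0) (x : V → A) :
    ∑ z : V → A, Toff E ρ P φ x z ≤ 1 := by
  classical
  obtain ⟨hρ0, hρ1, hP, hPsum, hφ, hφsum, hE, -⟩ := h
  have hm : (0:ℝ) < (E.card : ℝ) := by exact_mod_cast Finset.card_pos.mpr hE
  have hn' : (0:ℝ) < (Fintype.card V : ℝ) := by
    have := Nat.pos_of_ne_zero hn; exact_mod_cast this
  set t : V → A → ℝ := fun u j =>
    (1 - ρ) * (1 / (Fintype.card V : ℝ)) * P (x u) j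
      + (ρ / (E.card : ℝ)) * ∑ e ∈ E.filter fun e => e.1 = u, φ (x u) j (x e.2) with ht
  have htnn : ∀ u j, 0 ≤ t u j := by
    intro u j
    refine add_nonneg (mul_nonneg (mul_nonneg (by linarith) (by positivity)) (hP _ _)) ?_
    exact mul_nonneg (div_nonneg hρ0 hm.le) (Finset.sum_nonneg fun e _ => hφ _ _ _)
  set S : Finset (V × A) := Finset.univ.filter (fun p => p.2 ≠ x p.1) with hS
  set D : Finset (V → A) := S.image (fun p => Function.update x p.1 p.2) with hD
  have step1 : ∑ z : V → A, Toff E ρ P φ x z = ∑ z ∈ D, Toff E ρ P φ x z := by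
    refine (Finset.sum_subset (Finset.subset_univ D) ?_).symm
    intro z _ hz
    refine Toff_eq_zero (fun hcard => hz ?_)
    obtain ⟨u, hu⟩ := Finset.card_eq_one.mp hcard
    have hzu : x u ≠ z u := by
      have : u ∈ Finset.univ.filter fun v => x v ≠ z v := hu ▸ Finset.mem_singleton_self u
      exact (Finset.mem_filter.mp this).2
    have hzeq : z = Function.update x u (z u) := by
      funext v
      by_cases hv : v = u
      · subst hv; rw [Function.update_self]
      · rw [Function.update_of_ne hv]
        by_contra hne
        have : v ∈ Finset.univ.filter fun w => x w ≠ z w :=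
          Finset.mem_filter.mpr ⟨Finset.mem_univ v, fun he => hne he.symm⟩
        rw [hu, Finset.mem_singleton] at this
        exact hv this
    rw [hD, Finset.mem_image]
    exact ⟨(u, z u), Finset.mem_filter.mpr ⟨Finset.mem_univ _, fun he => hzu he.symm⟩, hzeq.symm⟩
  have hinj : Set.InjOn (fun p : V × A => Function.update x p.1 p.2) S := by
    intro p hp q hq hpq
    simp only [hS, Finset.coe_filter, Set.mem_setOf_eq] at hp hq
    have h1 : p.1 = q.1 := by
      by_contra hne
      have := congrFun hpq p.1
      dsimp only at this
      rw [Function.update_self, Function.update_of_ne hne] at this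
      exact hp.2 this
    have h2 : p.2 = q.2 := by
      have := congrFun hpq p.1
      dsimp only at this
      rw [Function.update_self, h1, Function.update_self] at this
      exact this
    exact Prod.ext h1 h2
  have step2 : ∑ z ∈ D, Toff E ρ P φ x z
      = ∑ p ∈ S, Toff E ρ P φ x (Function.update x p.1 p.2) := by
    rw [hD, Finset.sum_image (fun p hp q hq => hinj hp hq)]
  have step3 : ∀ p ∈ S, Toff E ρ P φ x (Function.update x p.1 p.2) = t p.1 p.2 := by
    intro p hp
    have hpx : p.2 ≠ x p.1 := (Finset.mem_filter.mp hp).2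
    have hfil : (Finset.univ.filter fun v => x v ≠ Function.update x p.1 p.2 v) = {p.1} := by
      ext v
      simp only [Finset.mem_filter, Finset.mem_univ, true_and, Finset.mem_singleton]
      constructor
      · intro hv
        by_contra hne
        rw [Function.update_of_ne hne] at hv
        exact hv rfl
      · intro hv; subst hv
        rw [Function.update_self]
        exact fun he => hpx he.symm
    unfold Toff
    rw [hfil]
    rw [if_pos (Finset.card_singleton _), Finset.sum_singleton, Function.update_self]
  rw [step1, step2, Finset.sum_congr rfl step3]
  have step4 : ∑ p ∈ S, t p.1 p.2 ≤ ∑ p : V × A, t p.1 p.2 :=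
    Finset.sum_le_sum_of_subset_of_nonneg (Finset.subset_univ S)
      (fun p _ _ => htnn p.1 p.2)
  refine step4.trans ?_
  rw [Fintype.sum_prod_type]
  have degsum : ∑ u : V, ((E.filter fun e => e.1 = u).card : ℝ) = (E.card : ℝ) := by
    rw [← Nat.cast_sum]
    congr 1
    exact (Finset.card_eq_sum_card_fiberwise (fun e _ => Finset.mem_univ e.1)).symm
  have inner : ∀ u : V, ∑ j : A, t u j
      = (1 - ρ) * (1 / (Fintype.card V : ℝ))
        + (ρ / (E.card : ℝ)) * ((E.filter fun e => e.1 = u).card : ℝ) := by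
    intro u
    rw [ht]
    simp only
    rw [Finset.sum_add_distrib, ← Finset.mul_sum, hPsum, mul_one, ← Finset.mul_sum]
    congr 1
    rw [Finset.sum_comm]
    rw [Finset.sum_congr rfl (fun e _ => hφsum (x u) (x e.2))]
    simp [Finset.sum_const]
  rw [Finset.sum_congr rfl (fun u _ => inner u)]
  rw [Finset.sum_add_distrib, Finset.sum_const, ← Finset.mul_sum, degsum]
  rw [Finset.card_univ, nsmul_eq_mul]
  rw [div_mul_cancel₀ _ (ne_of_gt hm)]
  have heq : (Fintype.card V : ℝ) * ((1 - ρ) * (1 / (Fintype.card V : ℝ))) = 1 - ρ := by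
    field_simp
  rw [heq]
  linarith

end AuxLemmas

lemma taylor_aux {A : Type*} [Fintype A] (W : (A → ℝ) → ℝ) (hW : ContDiff ℝ 2 W) :
    ∃ M : ℝ, 0 ≤ M ∧ ∀ a b : A → ℝ, ‖a‖ ≤ 1 → ‖b‖ ≤ 1 →
      |W b - W a - fderiv ℝ W a (b - a)| ≤ M * (‖b - a‖ * ‖b - a‖) := by
  have hd1 : ContDiff ℝ 1 (fderiv ℝ W) := hW.fderiv_right (m := 1) (by norm_num)
  have hc : Continuous (fderiv ℝ (fderiv ℝ W)) := hd1.continuous_fderiv (by norm_num)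
  obtain ⟨C, hC⟩ := (isCompact_closedBall (0 : A → ℝ) 1).exists_bound_of_continuousOn
    (E := (A → ℝ) →L[ℝ] (A → ℝ) →L[ℝ] ℝ) hc.continuousOn
  refine ⟨max C 0, le_max_right _ _, fun a b ha hb => ?_⟩
  have ha' : a ∈ Metric.closedBall (0 : A → ℝ) 1 := by
    rwa [Metric.mem_closedBall, dist_zero_right]
  have hb' : b ∈ Metric.closedBall (0 : A → ℝ) 1 := by
    rwa [Metric.mem_closedBall, dist_zero_right]
  have hlip : ∀ z ∈ Metric.closedBall (0 : A → ℝ) 1,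
      ‖fderiv ℝ W z - fderiv ℝ W a‖ ≤ max C 0 * ‖z - a‖ := by
    intro z hz
    exact (convex_closedBall _ _).norm_image_sub_le_of_norm_fderiv_le
      (fun w _ => (hd1.differentiable (by norm_num)).differentiableAt)
      (fun w hw => (hC w hw).trans (le_max_left _ _)) ha' hz
  have hseg : segment ℝ a b ⊆ Metric.closedBall (0 : A → ℝ) 1 :=
    (convex_closedBall _ _).segment_subset ha' hb'
  have key : ‖W b - W a - (fderiv ℝ W a) (b - a)‖ ≤ (max C 0 * ‖b - a‖) * ‖b - a‖ := by
    refine Convex.norm_image_sub_le_of_norm_fderiv_le'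
      (fun z _ => (hW.differentiable (by norm_num)).differentiableAt)
      (fun z hz => ?_) (convex_segment a b) (left_mem_segment ℝ a b) (right_mem_segment ℝ a b)
    have h1 := hlip z (hseg hz)
    have h2 : ‖z - a‖ ≤ ‖b - a‖ := by
      have h3 := dist_add_dist_of_mem_segment hz
      have h4 : dist a z ≤ dist a b := by
        have := dist_nonneg (x := z) (y := b); linarith
      rw [dist_eq_norm] at h4
      calc ‖z - a‖ = ‖a - z‖ := (norm_sub_rev _ _)
        _ ≤ ‖a - b‖ := h4
        _ = ‖b - a‖ := norm_sub_rev _ _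
    exact h1.trans (mul_le_mul_of_nonneg_left h2 (le_max_right _ _))
  calc |W b - W a - fderiv ℝ W a (b - a)| = ‖W b - W a - fderiv ℝ W a (b - a)‖ :=
      (Real.norm_eq_abs _).symm
    _ ≤ (max C 0 * ‖b - a‖) * ‖b - a‖ := key
    _ = max C 0 * (‖b - a‖ * ‖b - a‖) := by ring

/-- Proposition: concentration from an approximate Lyapunov inequality.
If `∇V(θ(x))·D(x) ≤ −F(x) + ε` for all configurations `x`, then, for a constant `K > 0`
depending only on `V`, every stationary distribution satisfies
`μ({x : F(x) < δ}) ≥ 1 − K/(nδ) − ε/δ` for every `δ > 0`. -/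
theorem concentration_of_approx_Lyapunov {A : Type*} [Fintype A] [DecidableEq A] [Nonempty A]
    (W : (A → ℝ) → ℝ) (hW : ContDiff ℝ 2 W) :
    ∃ K > (0 : ℝ), ∀ (V : Type) [Fintype V] [DecidableEq V],
      ∀ (E : Finset (V × V)) (ρ : ℝ) (P : A → A → ℝ) (φ : A → A → A → ℝ),
        IsPinModel E ρ P φ →
      ∀ (μ : (V → A) → ℝ), PinIsStationary E ρ P φ μ →
      ∀ (F : (V → A) → ℝ), (∀ x, 0 ≤ F x) →
      ∀ ε : ℝ, 0 ≤ ε →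
      (∀ x : V → A, fderiv ℝ W (confType x) (meanDrift E ρ P φ x) ≤ -F x + ε) →
      ∀ δ > (0 : ℝ),
        massOf μ (fun x => F x < δ) ≥
          1 - K / ((Fintype.card V : ℝ) * δ) - ε / δ := by
  classical
  obtain ⟨M, hM0, hTay⟩ := taylor_aux W hW
  refine ⟨M + 1, by positivity, ?_⟩
  intro V _ _ E ρ P φ hmodel μ hstat F hF ε hε hdrift δ hδ
  obtain ⟨hμ0, hμ1, hμstat⟩ := hstat
  by_cases hn : Fintype.card V = 0
  · -- degenerate case: no nodes
    haveI : IsEmpty V := Fintype.card_eq_zero_iff.mp hn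
    have hμd : μ default = 1 := by rw [← hμ1, Fintype.sum_unique]
    have hmd : meanDrift E ρ P φ (default : V → A) = 0 := by
      funext i; simp [meanDrift, hn]
    have hFd : F default ≤ ε := by
      have h := hdrift default
      rw [hmd, map_zero] at h
      linarith
    rw [hn]
    simp only [Nat.cast_zero, zero_mul, div_zero]
    by_cases hcase : F (default : V → A) < δ
    · have hmass : massOf μ (fun x => F x < δ) = 1 := by
        rw [massOf, Fintype.sum_unique, if_pos hcase, hμd]
      rw [hmass]
      have : 0 ≤ ε / δ := by positivity
      linarith
    · have hεδ : δ ≤ ε := le_trans (not_lt.mp hcase) hFd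
      have hmass : massOf μ (fun x => F x < δ) = 0 := by
        rw [massOf, Fintype.sum_unique, if_neg hcase]
      rw [hmass]
      have : 1 ≤ ε / δ := (one_le_div hδ).mpr hεδ
      linarith
  · -- main case
    have hn' : (0:ℝ) < (Fintype.card V : ℝ) := by
      have := Nat.pos_of_ne_zero hn; exact_mod_cast this
    set n : ℝ := (Fintype.card V : ℝ) with hndef
    -- Step A: stationarity identity
    have hA : ∑ x : V → A,
        μ x * ∑ y : V → A, pinTrans E ρ P φ x y * (W (confType y) - W (confType x)) = 0 := by
      have expand : ∀ x : V → A,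
          μ x * ∑ y : V → A, pinTrans E ρ P φ x y * (W (confType y) - W (confType x))
          = (∑ y : V → A, μ x * pinTrans E ρ P φ x y * W (confType y))
            - μ x * W (confType x) := by
        intro x
        rw [Finset.mul_sum]
        have h1 : ∀ y : V → A, μ x * (pinTrans E ρ P φ x y * (W (confType y) - W (confType x)))
            = μ x * pinTrans E ρ P φ x y * W (confType y)
              - μ x * pinTrans E ρ P φ x y * W (confType x) := fun y => by ring
        rw [Finset.sum_congr rfl fun y _ => h1 y, Finset.sum_sub_distrib]
        congr 1
        have h2 : ∑ y : V → A, μ x * pinTrans E ρ P φ x y * W (confType x)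
            = (μ x * ∑ y : V → A, pinTrans E ρ P φ x y) * W (confType x) := by
          rw [Finset.mul_sum, Finset.sum_mul]
        rw [h2, pinTrans_rowsum, mul_one]
      rw [Finset.sum_congr rfl fun x _ => expand x, Finset.sum_sub_distrib]
      have swap : ∑ x : V → A, ∑ y : V → A, μ x * pinTrans E ρ P φ x y * W (confType y)
          = ∑ y : V → A, μ y * W (confType y) := by
        rw [Finset.sum_comm]
        refine Finset.sum_congr rfl fun y _ => ?_
        rw [← Finset.sum_mul, hμstat y]
      rw [swap, sub_self]
    -- Step B: one-step Taylor bound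
    have hB : ∀ x : V → A,
        ∑ y : V → A, pinTrans E ρ P φ x y * (W (confType y) - W (confType x))
          ≤ (1/n) * (fderiv ℝ W (confType x)) (meanDrift E ρ P φ x) + M * (1/n)^2 := by
      intro x
      have hdecomp : ∀ y : V → A,
          pinTrans E ρ P φ x y * (W (confType y) - W (confType x))
          = pinTrans E ρ P φ x y * (fderiv ℝ W (confType x)) (confType y - confType x)
            + pinTrans E ρ P φ x y * (W (confType y) - W (confType x)
              - (fderiv ℝ W (confType x)) (confType y - confType x)) := fun y => by ring
      rw [Finset.sum_congr rfl fun y _ => hdecomp y, Finset.sum_add_distrib]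
      have hmean : meanDrift E ρ P φ x
          = n • ∑ y : V → A, pinTrans E ρ P φ x y • ((confType y : A → ℝ) - confType x) := by
        funext i
        rw [Pi.smul_apply, Finset.sum_apply]
        simp only [Pi.smul_apply, Pi.sub_apply, smul_eq_mul]
        rw [meanDrift, hndef]
      have claim1 : (1/n) * (fderiv ℝ W (confType x)) (meanDrift E ρ P φ x)
          = ∑ y : V → A,
              pinTrans E ρ P φ x y * (fderiv ℝ W (confType x)) (confType y - confType x) := by
        rw [hmean, map_smul, smul_eq_mul, ← mul_assoc, one_div,
          inv_mul_cancel₀ (ne_of_gt hn'), one_mul, map_sum]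
        exact Finset.sum_congr rfl fun y _ => by rw [map_smul, smul_eq_mul]
      have hterm : ∀ y : V → A,
          pinTrans E ρ P φ x y * (W (confType y) - W (confType x)
              - (fderiv ℝ W (confType x)) (confType y - confType x))
            ≤ Toff E ρ P φ x y * (M * (1/n)^2) := by
        intro y
        by_cases hxy : x = y
        · subst hxy
          have h0 : (confType x : A → ℝ) - confType x = 0 := sub_self _
          rw [h0, map_zero, Toff_self]
          simp
        · rw [pinTrans, if_neg hxy]
          by_cases hcard : (Finset.univ.filter fun v => x v ≠ y v).card = 1
          · have hT0 : 0 ≤ Toff E ρ P φ x y := Toff_nonneg hmodel x y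
            have hR : |W (confType y) - W (confType x)
                - (fderiv ℝ W (confType x)) (confType y - confType x)| ≤ M * (1/n)^2 := by
              have h1 := hTay (confType x) (confType y) (confType_norm_le x) (confType_norm_le y)
              have h2 := confType_sub_norm_le x y hcard
              refine h1.trans ?_
              have hnn : (0:ℝ) ≤ ‖(confType y - confType x : A → ℝ)‖ := norm_nonneg _
              have h3 : ‖(confType y - confType x : A → ℝ)‖ * ‖(confType y - confType x : A → ℝ)‖
                  ≤ (1/n) * (1/n) := mul_le_mul h2 h2 hnn (by positivity)
              calc M * (‖(confType y - confType x : A → ℝ)‖ *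
                    ‖(confType y - confType x : A → ℝ)‖)
                  ≤ M * ((1/n)*(1/n)) := mul_le_mul_of_nonneg_left h3 hM0
                _ = M * (1/n)^2 := by ring
            exact mul_le_mul_of_nonneg_left (le_trans (le_abs_self _) hR) hT0
          · rw [Toff_eq_zero hcard]
            simp
      have claim2 : ∑ y : V → A,
          pinTrans E ρ P φ x y * (W (confType y) - W (confType x)
            - (fderiv ℝ W (confType x)) (confType y - confType x)) ≤ M * (1/n)^2 := by
        calc ∑ y : V → A, pinTrans E ρ P φ x y * (W (confType y) - W (confType x)
              - (fderiv ℝ W (confType x)) (confType y - confType x))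
            ≤ ∑ y : V → A, Toff E ρ P φ x y * (M * (1/n)^2) :=
              Finset.sum_le_sum fun y _ => hterm y
          _ = (∑ y : V → A, Toff E ρ P φ x y) * (M * (1/n)^2) := (Finset.sum_mul _ _ _).symm
          _ ≤ 1 * (M * (1/n)^2) := by
              refine mul_le_mul_of_nonneg_right (offsum_le_one hmodel hn x) ?_
              exact mul_nonneg hM0 (by positivity)
          _ = M * (1/n)^2 := one_mul _
      rw [claim1]
      linarith [claim2]
    -- Step C: expected value bound
    have hC : ∑ x : V → A, μ x * F x ≤ ε + (M + 1) / n := by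
      have h1 : (0:ℝ) ≤ ∑ x : V → A, μ x * ((1/n) * (-F x + ε) + M * (1/n)^2) := by
        rw [← hA]
        refine Finset.sum_le_sum fun x _ => mul_le_mul_of_nonneg_left ((hB x).trans ?_) (hμ0 x)
        have h2 : (1/n) * ((fderiv ℝ W (confType x)) (meanDrift E ρ P φ x))
            ≤ (1/n) * (-F x + ε) :=
          mul_le_mul_of_nonneg_left (hdrift x) (by positivity)
        linarith
      have h3 : ∑ x : V → A, μ x * ((1/n) * (-F x + ε) + M * (1/n)^2)
          = (1/n) * ε + M * (1/n)^2 - (1/n) * ∑ x : V → A, μ x * F x := by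
        have h4 : ∀ x : V → A, μ x * ((1/n) * (-F x + ε) + M * (1/n)^2)
            = ((1/n) * ε + M * (1/n)^2) * μ x - (1/n) * (μ x * F x) := fun x => by ring
        rw [Finset.sum_congr rfl fun x _ => h4 x, Finset.sum_sub_distrib, ← Finset.mul_sum,
          ← Finset.mul_sum, hμ1, mul_one]
      rw [h3] at h1
      have h4 : (1/n) * ∑ x : V → A, μ x * F x ≤ (1/n) * ε + M * (1/n)^2 := by linarith
      have h6 := mul_le_mul_of_nonneg_left h4 hn'.le
      rw [show n * ((1/n) * ∑ x : V → A, μ x * F x) = ∑ x : V → A, μ x * F x by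
            field_simp,
          show n * ((1/n) * ε + M * (1/n)^2) = ε + M / n by
            field_simp] at h6
      have h7 : M / n ≤ (M + 1) / n := by gcongr <;> linarith
      linarith
    -- Markov inequality
    have hsum : ∑ x : V → A, (1 - F x / δ) * μ x
        = 1 - (∑ x : V → A, μ x * F x) * (1/δ) := by
      have h4 : ∀ x : V → A, (1 - F x / δ) * μ x = μ x - (μ x * F x) * (1/δ) := fun x => by ring
      rw [Finset.sum_congr rfl fun x _ => h4 x, Finset.sum_sub_distrib, hμ1, ← Finset.sum_mul]
    rw [ge_iff_le]
    have hgoal : ∑ x : V → A, (1 - F x / δ) * μ x ≤ massOf μ (fun x => F x < δ) := by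
      rw [massOf]
      refine Finset.sum_le_sum fun x _ => ?_
      by_cases hx : F x < δ
      · rw [if_pos hx]
        have h1 : 0 ≤ F x / δ := div_nonneg (hF x) hδ.le
        nlinarith [hμ0 x]
      · rw [if_neg hx]
        have hxf : δ ≤ F x := not_lt.mp hx
        have h1 : 1 ≤ F x / δ := (one_le_div hδ).mpr hxf
        nlinarith [hμ0 x]
    refine le_trans ?_ hgoal
    rw [hsum]
    have h5 : (∑ x : V → A, μ x * F x) * (1/δ) ≤ (ε + (M+1)/n) * (1/δ) :=
      mul_le_mul_of_nonneg_right hC (by positivity)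
    have h6 : (ε + (M+1)/n) * (1/δ) = ε/δ + (M+1)/(n*δ) := by
      rw [add_mul, mul_one_div, mul_one_div, div_div]
    linarith

end
end
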